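/- Let w₁, w₂ ∈ ℂ with |w₁|² + |w₂|² = 1, let q := w₁ + w₂ j ∈ ℍ, and let μ ∈ ℂ with μ ∉ ℝ. If the quaternion q · μ · q⁻¹ lies in the complex subfield ℂ ⊂ ℍ (i.e., its j- and k-components vanish), then w₁ = 0 or w₂ = 0; moreover q · μ · q⁻¹ = μ when w₂ = 0, and q · μ · q⁻¹ = μ̄ (the complex conjugate) when w₁ = 0. -/

import Mathlib

/-- The embedding `ℂ → ℍ` sending `a + b√-1` to the quaternion `a + b i`. -/
def toQuat (z : ℂ) : Quaternion ℝ := ⟨z.re, z.im, 0, 0⟩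

/-- The quaternion `j`. -/
def quatJ : Quaternion ℝ := ⟨0, 0, 1, 0⟩

/-- Let `w₁, w₂ ∈ ℂ` with `|w₁|² + |w₂|² = 1`, let
`q := w₁ + w₂ j ∈ ℍ`, and let `μ ∈ ℂ` with `μ ∉ ℝ`.  If the quaternion `q · μ · q⁻¹` lies
in the complex subfield `ℂ ⊂ ℍ` (i.e. its `j`- and `k`-components vanish), then `w₁ = 0`
or `w₂ = 0`; moreover `q · μ · q⁻¹ = μ` when `w₂ = 0`, and `q · μ · q⁻¹ = μ̄` when
`w₁ = 0`. -/
theorem stmt_17 (w₁ w₂ : ℂ) (h : Complex.normSq w₁ + Complex.normSq w₂ = 1)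
    (μ : ℂ) (hμ : μ.im ≠ 0)
    (hJ : ((toQuat w₁ + toQuat w₂ * quatJ) * toQuat μ *
            (toQuat w₁ + toQuat w₂ * quatJ)⁻¹).imJ = 0)
    (hK : ((toQuat w₁ + toQuat w₂ * quatJ) * toQuat μ *
            (toQuat w₁ + toQuat w₂ * quatJ)⁻¹).imK = 0) :
    (w₁ = 0 ∨ w₂ = 0) ∧
    (w₂ = 0 → (toQuat w₁ + toQuat w₂ * quatJ) * toQuat μ *
        (toQuat w₁ + toQuat w₂ * quatJ)⁻¹ = toQuat μ) ∧
    (w₁ = 0 → (toQuat w₁ + toQuat w₂ * quatJ) * toQuat μ *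
        (toQuat w₁ + toQuat w₂ * quatJ)⁻¹ = toQuat (starRingEnd ℂ μ)) := by
  set q : Quaternion ℝ := toQuat w₁ + toQuat w₂ * quatJ with hqdef
  simp only [Complex.normSq_apply] at h
  have hnorm : q * star q = 1 := by
    rw [Quaternion.self_mul_star]
    have h1 : Quaternion.normSq q = 1 := by
      rw [Quaternion.normSq_def']
      simp only [hqdef, Quaternion.imI_add, Quaternion.imJ_add,
        Quaternion.imK_add, Quaternion.re_add, Quaternion.re_mul, Quaternion.imI_mul,
        Quaternion.imJ_mul, Quaternion.imK_mul]
      simp only [toQuat, quatJ]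
      nlinarith [h]
    rw [h1]; exact_mod_cast rfl
  have hinv : q⁻¹ = star q := inv_eq_of_mul_eq_one_right hnorm
  rw [hinv] at hJ hK ⊢
  obtain ⟨a, b⟩ := w₁
  obtain ⟨c, d⟩ := w₂
  obtain ⟨x, y⟩ := μ
  simp only [hqdef, Quaternion.imI_add, Quaternion.imJ_add,
    Quaternion.imK_add, Quaternion.re_add, Quaternion.re_mul, Quaternion.imI_mul,
    Quaternion.imJ_mul, Quaternion.imK_mul, Quaternion.re_star, Quaternion.imI_star,
    Quaternion.imJ_star, Quaternion.imK_star] at hJ hK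
  simp only [toQuat, quatJ] at hJ hK
  simp only [Complex.ext_iff, Complex.zero_re, Complex.zero_im] at hμ ⊢
  have hy : y ≠ 0 := hμ
  ring_nf at hJ hK
  have e1 : a * d + c * b = 0 := by
    have h2 : (a * d + c * b) * (y * 2) = 0 := by linarith [hJ]
    rcases mul_eq_zero.mp h2 with h3 | h3
    · exact h3
    · exact absurd h3 (by simp [hy])
  have e2 : a * c - b * d = 0 := by
    have h2 : (a * c - b * d) * (y * 2) = 0 := by linarith [hK]
    rcases mul_eq_zero.mp h2 with h3 | h3
    · exact h3
    · exact absurd h3 (by simp [hy])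
  have key : (a ^ 2 + b ^ 2) * (c ^ 2 + d ^ 2) = 0 := by
    have hid : (a ^ 2 + b ^ 2) * (c ^ 2 + d ^ 2) =
        (a * c - b * d) ^ 2 + (a * d + c * b) ^ 2 := by ring
    rw [hid, e1, e2]; simp
  have hdisj : (a = 0 ∧ b = 0) ∨ (c = 0 ∧ d = 0) := by
    rcases mul_eq_zero.mp key with h3 | h3
    · left; constructor <;> nlinarith [sq_nonneg a, sq_nonneg b]
    · right; constructor <;> nlinarith [sq_nonneg c, sq_nonneg d]
  refine ⟨hdisj, ?_, ?_⟩
  · rintro ⟨hc, hd⟩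
    subst hc; subst hd
    ring_nf at h
    simp only [hqdef, Quaternion.ext_iff, Quaternion.imI_add, Quaternion.imJ_add,
      Quaternion.imK_add, Quaternion.re_add, Quaternion.re_mul, Quaternion.imI_mul,
      Quaternion.imJ_mul, Quaternion.imK_mul, Quaternion.re_star, Quaternion.imI_star,
      Quaternion.imJ_star, Quaternion.imK_star]
    simp only [toQuat, quatJ]
    refine ⟨by linear_combination x * h, by linear_combination y * h, by ring, by ring⟩
  · rintro ⟨ha, hb⟩
    subst ha; subst hb
    ring_nf at h
    simp only [hqdef, Quaternion.ext_iff,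
      Quaternion.imI_add, Quaternion.imJ_add,
      Quaternion.imK_add, Quaternion.re_add, Quaternion.re_mul, Quaternion.imI_mul,
      Quaternion.imJ_mul, Quaternion.imK_mul, Quaternion.re_star, Quaternion.imI_star,
      Quaternion.imJ_star, Quaternion.imK_star]
    simp only [toQuat, quatJ, Complex.conj_re, Complex.conj_im]
    refine ⟨by linear_combination x * h, by linear_combination (-y) * h, by ring, by ring⟩
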